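/- Tight relaxation of unconstrained fractional set programs: for non-negative set functions R̂, Ŝ with R̂(∅)=Ŝ(∅)=0 and Lovasz extensions R, S, the infimum over nonempty subsets C ⊆ V of R̂(C)/Ŝ(C) equals the infimum over f ∈ ℝ₊^n of R(f)/S(f). -/

import Mathlib

open Finset

noncomputable def sortedVal {n : ℕ} (f : Fin n → ℝ) : Fin n → ℝ := f ∘ Tuple.sort f

noncomputable def thresholdSet {n : ℕ} (f : Fin n → ℝ) (i : Fin n) : Finset (Fin n) :=
  Finset.univ.filter (fun j => sortedVal f i ≤ f j)

noncomputable def lovasz {n : ℕ} (R : Finset (Fin n) → ℝ) (f : Fin n → ℝ) : ℝ :=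
  (∑ i : Fin n, if h : (i : ℕ) + 1 < n then
      R (thresholdSet f ⟨(i : ℕ) + 1, h⟩) * (sortedVal f ⟨(i : ℕ) + 1, h⟩ - sortedVal f i)
    else 0)
  + R Finset.univ * (if h : 0 < n then sortedVal f ⟨0, h⟩ else 0)

def Submodular {α : Type*} [DecidableEq α] (R : Finset α → ℝ) : Prop :=
  ∀ A B : Finset α, R (A ∪ B) + R (A ∩ B) ≤ R A + R B

lemma sortedVal_mono {n : ℕ} (f : Fin n → ℝ) : Monotone (sortedVal f) :=
  Tuple.monotone_sort f

lemma sortedVal_perm {n : ℕ} (f : Fin n → ℝ) (j : Fin n) :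
    sortedVal f ((Tuple.sort f)⁻¹ j) = f j := by
  simp [sortedVal]

/-- Key comparison lemma: if `m * S A ≤ R A` for all `A`, it passes to Lovász extensions. -/
lemma lovasz_mul_le {n : ℕ} (R S : Finset (Fin n) → ℝ) (m : ℝ)
    (h : ∀ A, m * S A ≤ R A) (f : Fin n → ℝ) (hf : ∀ i, 0 ≤ f i) :
    m * lovasz S f ≤ lovasz R f := by
  unfold lovasz
  rw [mul_add, Finset.mul_sum]
  refine add_le_add (Finset.sum_le_sum fun i _ => ?_) ?_
  · split_ifs with h1
    · have hw : 0 ≤ sortedVal f ⟨(i : ℕ) + 1, h1⟩ - sortedVal f i := by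
        have := sortedVal_mono f (show i ≤ ⟨(i : ℕ) + 1, h1⟩ by
          simp [Fin.le_def])
        linarith
      calc m * (S (thresholdSet f ⟨(i : ℕ) + 1, h1⟩) *
            (sortedVal f ⟨(i : ℕ) + 1, h1⟩ - sortedVal f i))
          = (m * S (thresholdSet f ⟨(i : ℕ) + 1, h1⟩)) *
            (sortedVal f ⟨(i : ℕ) + 1, h1⟩ - sortedVal f i) := by ring
        _ ≤ _ := mul_le_mul_of_nonneg_right (h _) hw
    · simp
  · split_ifs with h0
    · have hw : 0 ≤ sortedVal f ⟨0, h0⟩ := hf _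
      calc m * (S Finset.univ * sortedVal f ⟨0, h0⟩)
          = (m * S Finset.univ) * sortedVal f ⟨0, h0⟩ := by ring
        _ ≤ _ := mul_le_mul_of_nonneg_right (h _) hw
    · simp

lemma lovasz_nonneg {n : ℕ} (R : Finset (Fin n) → ℝ) (hR : ∀ A, 0 ≤ R A)
    (f : Fin n → ℝ) (hf : ∀ i, 0 ≤ f i) : 0 ≤ lovasz R f := by
  have := lovasz_mul_le R R 0 (fun A => by simpa using hR A) f hf
  simpa using this

lemma lovasz_indicator {n : ℕ} (g : Finset (Fin n) → ℝ) (C : Finset (Fin n))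
    (hC : C.Nonempty) :
    lovasz g (fun j => if j ∈ C then (1 : ℝ) else 0) = g C := by
  set f : Fin n → ℝ := fun j => if j ∈ C then (1 : ℝ) else 0 with hfdef
  obtain ⟨j0, hj0⟩ := hC
  have hn : 0 < n := j0.pos
  have hv01 : ∀ i, sortedVal f i = 0 ∨ sortedVal f i = 1 := by
    intro i
    simp only [sortedVal, Function.comp_apply, hfdef]
    split_ifs <;> simp
  have hvnonneg : ∀ i, (0 : ℝ) ≤ sortedVal f i := by
    intro i; rcases hv01 i with h | h <;> simp [h]
  have hvle1 : ∀ i, sortedVal f i ≤ 1 := by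
    intro i; rcases hv01 i with h | h <;> simp [h]
  have hmono : Monotone (sortedVal f) := sortedVal_mono f
  have hthr : ∀ k : Fin n, sortedVal f k = 1 → thresholdSet f k = C := by
    intro k hk
    ext j
    simp only [thresholdSet, mem_filter, mem_univ, true_and, hk, hfdef]
    split_ifs with hj
    · simp [hj, show sortedVal (fun j => if j ∈ C then (1:ℝ) else 0) k = 1 from hk]
    · simp only [hj, iff_false]; norm_num [show sortedVal (fun j => if j ∈ C then (1:ℝ) else 0) k = 1 from hk]
  -- last sorted value is 1
  have hlast : sortedVal f ⟨n - 1, by omega⟩ = 1 := by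
    have h1 : f j0 = 1 := by simp [hfdef, hj0]
    have h2 : sortedVal f ((Tuple.sort f)⁻¹ j0) ≤ sortedVal f ⟨n - 1, by omega⟩ := by
      apply hmono
      simp only [Fin.le_def]
      have := ((Tuple.sort f)⁻¹ j0).isLt
      omega
    rw [sortedVal_perm, h1] at h2
    exact le_antisymm (hvle1 _) h2
  -- each term of the sum
  have hterm : ∀ i : Fin n,
      (if h : (i : ℕ) + 1 < n then
        g (thresholdSet f ⟨(i : ℕ) + 1, h⟩) *
          (sortedVal f ⟨(i : ℕ) + 1, h⟩ - sortedVal f i)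
      else 0)
      = (if h : (i : ℕ) + 1 < n then
        g C * (sortedVal f ⟨(i : ℕ) + 1, h⟩ - sortedVal f i) else 0) := by
    intro i
    split_ifs with h1
    · rcases hv01 ⟨(i : ℕ) + 1, h1⟩ with hv | hv
      · have hvi : sortedVal f i = 0 := by
          have := hmono (show i ≤ ⟨(i : ℕ) + 1, h1⟩ by simp [Fin.le_def])
          have := hvnonneg i
          rw [hv] at *
          linarith
        rw [hv, hvi]; ring
      · rw [hthr _ hv]
    · rfl
  -- telescoping
  set V : ℕ → ℝ := fun k => if h : k < n then sortedVal f ⟨k, h⟩ else 0 with hVdef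
  have hsum : (∑ i : Fin n, if h : (i : ℕ) + 1 < n then
        g C * (sortedVal f ⟨(i : ℕ) + 1, h⟩ - sortedVal f i) else 0)
      = g C * (V (n - 1) - V 0) := by
    have hF : (∑ i : Fin n, if h : (i : ℕ) + 1 < n then
          g C * (sortedVal f ⟨(i : ℕ) + 1, h⟩ - sortedVal f i) else 0)
        = ∑ k ∈ Finset.range n, (if h : k + 1 < n then
          g C * (sortedVal f ⟨k + 1, h⟩ - sortedVal f ⟨k, by omega⟩) else 0) := by
      rw [← Fin.sum_univ_eq_sum_range]
    rw [hF]
    rw [show Finset.range n = Finset.range ((n - 1) + 1) from by rw [Nat.sub_add_cancel hn]]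
    rw [Finset.sum_range_succ]
    have hzero : (if h : (n - 1) + 1 < n then
        g C * (sortedVal f ⟨(n - 1) + 1, h⟩ - sortedVal f ⟨n - 1, by omega⟩) else 0) = 0 := by
      rw [dif_neg (by omega)]
    rw [hzero, add_zero]
    have : ∀ k ∈ Finset.range (n - 1), (if h : k + 1 < n then
          g C * (sortedVal f ⟨k + 1, h⟩ - sortedVal f ⟨k, by omega⟩) else 0)
        = g C * (V (k + 1) - V k) := by
      intro k hk
      simp only [Finset.mem_range] at hk
      rw [dif_pos (by omega)]
      simp only [hVdef]
      rw [dif_pos (by omega : k + 1 < n), dif_pos (by omega : k < n)]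
    rw [Finset.sum_congr rfl this, ← Finset.mul_sum, Finset.sum_range_sub]
  have hlov : lovasz g f = g C * (V (n - 1) - V 0) + g Finset.univ * V 0 := by
    unfold lovasz
    rw [Finset.sum_congr rfl (fun i _ => hterm i), hsum, dif_pos hn]
    simp only [hVdef]
    rw [dif_pos hn]
  rw [hlov]
  have hVlast : V (n - 1) = 1 := by
    simp only [hVdef]
    rw [dif_pos (by omega)]
    exact hlast
  by_cases hCu : C = Finset.univ
  · have hV0 : V 0 = 1 := by
      simp only [hVdef]
      rw [dif_pos hn]
      have : f (Tuple.sort f ⟨0, hn⟩) = 1 := by simp [hfdef, hCu]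
      simpa [sortedVal] using this
    rw [hVlast, hV0, hCu]; ring
  · obtain ⟨j1, hj1⟩ : ∃ j, j ∉ C := by
      by_contra h
      push_neg at h
      exact hCu (Finset.eq_univ_iff_forall.2 h)
    have hV0 : V 0 = 0 := by
      simp only [hVdef]
      rw [dif_pos hn]
      have h1 : f j1 = 0 := by simp [hfdef, hj1]
      have h2 : sortedVal f ⟨0, hn⟩ ≤ sortedVal f ((Tuple.sort f)⁻¹ j1) := by
        apply hmono
        simp [Fin.le_def]
      rw [sortedVal_perm, h1] at h2
      exact le_antisymm h2 (hvnonneg _)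
    rw [hVlast, hV0]; ring

/-- tight relaxation of unconstrained fractional set programs
(ratios with zero denominator, being +∞, are excluded on both sides). -/
theorem tight_relaxation {n : ℕ} (R S : Finset (Fin n) → ℝ)
    (hR0 : R ∅ = 0) (hS0 : S ∅ = 0)
    (hRpos : ∀ A : Finset (Fin n), 0 ≤ R A) (hSpos : ∀ A : Finset (Fin n), 0 ≤ S A) :
    sInf {q : ℝ | ∃ C : Finset (Fin n), C.Nonempty ∧ 0 < S C ∧ q = R C / S C}
      = sInf {q : ℝ | ∃ f : Fin n → ℝ, (∀ i, 0 ≤ f i) ∧ 0 < lovasz S f ∧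
          q = lovasz R f / lovasz S f} := by
  set L := {q : ℝ | ∃ C : Finset (Fin n), C.Nonempty ∧ 0 < S C ∧ q = R C / S C} with hLdef
  set T := {q : ℝ | ∃ f : Fin n → ℝ, (∀ i, 0 ≤ f i) ∧ 0 < lovasz S f ∧
      q = lovasz R f / lovasz S f} with hTdef
  have hLT : L ⊆ T := by
    rintro q ⟨C, hCne, hSC, rfl⟩
    refine ⟨fun j => if j ∈ C then (1 : ℝ) else 0, ?_, ?_, ?_⟩
    · intro i; dsimp only; split_ifs <;> norm_num
    · rw [lovasz_indicator S C hCne]; exact hSC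
    · rw [lovasz_indicator S C hCne, lovasz_indicator R C hCne]
  have hbddT : BddBelow T := by
    refine ⟨0, ?_⟩
    rintro q ⟨f, hf, hSf, rfl⟩
    exact div_nonneg (lovasz_nonneg R hRpos f hf) hSf.le
  by_cases hL : L.Nonempty
  · have hbddL : BddBelow L := hbddT.mono hLT
    apply le_antisymm
    · refine le_csInf (hL.mono hLT) ?_
      rintro q ⟨f, hf, hSf, rfl⟩
      set m := sInf L with hm
      have hmA : ∀ A : Finset (Fin n), m * S A ≤ R A := by
        intro A
        rcases A.eq_empty_or_nonempty with rfl | hA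
        · rw [hR0, hS0, mul_zero]
        · rcases lt_or_eq_of_le (hSpos A) with hSA | hSA
          · have hmle : m ≤ R A / S A := csInf_le hbddL ⟨A, hA, hSA, rfl⟩
            rw [← le_div_iff₀ hSA]
            exact hmle
          · rw [← hSA, mul_zero]; exact hRpos A
      have := lovasz_mul_le R S m hmA f hf
      rw [le_div_iff₀ hSf]
      exact this
    · exact csInf_le_csInf hbddT hL hLT
  · have hSz : ∀ A : Finset (Fin n), S A = 0 := by
      intro A
      rcases A.eq_empty_or_nonempty with rfl | hA
      · exact hS0
      · by_contra h
        exact hL ⟨R A / S A, A, hA, lt_of_le_of_ne (hSpos A) (Ne.symm h), rfl⟩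
    have hT : T = ∅ := by
      ext q
      simp only [hTdef, Set.mem_setOf_eq, Set.mem_empty_iff_false, iff_false]
      rintro ⟨f, hf, hSf, _⟩
      have : lovasz S f = 0 := by
        unfold lovasz
        simp [hSz]
      linarith
    rw [Set.not_nonempty_iff_eq_empty.1 hL, hT]
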